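/- Let S be a real 2n×2n symplectic matrix. Then det(SJ + JS) = det(I + J⁻¹S⁻¹JS) = det(I + SᵀS), where I is the 2n×2n identity matrix. -/

import Mathlib

open Matrix

section Aux

variable {l : Type*} [Fintype l] [DecidableEq l]

lemma skew_det_eq (X Y : Matrix l l ℝ) :
    ((fromBlocks X Y (-Y) X).det : ℂ)
      = (X.map Complex.ofReal + Complex.I • Y.map Complex.ofReal).det *
        (X.map Complex.ofReal - Complex.I • Y.map Complex.ofReal).det := by
  set X' := X.map Complex.ofReal with hX'
  set Y' := Y.map Complex.ofReal with hY'
  have hmap : (fromBlocks X Y (-Y) X).map Complex.ofReal = fromBlocks X' Y' (-Y') X' := by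
    rw [fromBlocks_map]
    have h : (-Y).map Complex.ofReal = -Y' := by ext i j; simp [Matrix.map_apply, hY']
    rw [h]
  have hdet : ((fromBlocks X Y (-Y) X).det : ℂ) = (fromBlocks X' Y' (-Y') X').det := by
    rw [← hmap]
    exact Complex.ofRealHom.map_det _
  set P : Matrix (l ⊕ l) (l ⊕ l) ℂ :=
    fromBlocks 1 1 (Complex.I • 1) (-(Complex.I • 1)) with hP
  set D : Matrix (l ⊕ l) (l ⊕ l) ℂ :=
    fromBlocks (X' + Complex.I • Y') 0 0 (X' - Complex.I • Y') with hD
  have hQ : P * fromBlocks (((2:ℂ)⁻¹) • 1) ((-(Complex.I)/2) • 1)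
      (((2:ℂ)⁻¹) • 1) ((Complex.I/2) • 1) = 1 := by
    rw [hP, fromBlocks_multiply, ← fromBlocks_one, fromBlocks_inj]
    refine ⟨?_, ?_, ?_, ?_⟩
    all_goals simp only [Matrix.one_mul, Matrix.smul_mul, Matrix.mul_smul, Matrix.neg_mul,
      Matrix.mul_one]
    all_goals match_scalars
    all_goals ring_nf
    all_goals simp [Complex.I_sq]
  have hPunit : IsUnit P.det := by
    exact IsUnit.of_mul_eq_one (a := P.det) ((fromBlocks (((2:ℂ)⁻¹) • (1 : Matrix l l ℂ))
      ((-(Complex.I)/2) • 1) (((2:ℂ)⁻¹) • 1) ((Complex.I/2) • 1)).det)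
      (by rw [← det_mul, hQ, det_one])
  have hcomm : fromBlocks X' Y' (-Y') X' * P = P * D := by
    rw [hP, hD, fromBlocks_multiply, fromBlocks_multiply, fromBlocks_inj]
    refine ⟨?_, ?_, ?_, ?_⟩
    all_goals simp only [Matrix.one_mul, Matrix.mul_one, Matrix.smul_mul, Matrix.mul_smul,
      Matrix.neg_mul, Matrix.mul_neg, Matrix.mul_zero, Matrix.zero_mul, add_zero, zero_add]
    all_goals match_scalars
    all_goals ring_nf
    all_goals simp [Complex.I_sq]
  have hdets := congrArg Matrix.det hcomm
  rw [det_mul, det_mul, mul_comm ((fromBlocks X' Y' (-Y') X').det)] at hdets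
  have hMD : (fromBlocks X' Y' (-Y') X').det = D.det := mul_left_cancel₀ hPunit.ne_zero hdets
  rw [hdet, hMD, hD, det_fromBlocks_zero₂₁]

lemma skew_det_nonneg (X Y : Matrix l l ℝ) : 0 ≤ (fromBlocks X Y (-Y) X).det := by
  have h := skew_det_eq X Y
  have hc : (X.map Complex.ofReal - Complex.I • Y.map Complex.ofReal).det
      = (starRingEnd ℂ) (X.map Complex.ofReal + Complex.I • Y.map Complex.ofReal).det := by
    rw [(starRingEnd ℂ).map_det]
    congr 1
    ext i j
    simp [Matrix.map_apply, Complex.conj_ofReal, sub_eq_add_neg]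
  rw [hc, Complex.mul_conj] at h
  rw [Complex.ofReal_inj.mp h]
  exact Complex.normSq_nonneg _

end Aux

/-- The standard symplectic matrix `J = [[0, −I],[I, 0]]` in `n×n` blocks. -/
noncomputable def Jmat (n : ℕ) : Matrix (Fin n ⊕ Fin n) (Fin n ⊕ Fin n) ℝ :=
  Matrix.fromBlocks 0 (-1) 1 0

lemma Jmat_eq (n : ℕ) : Jmat n = Matrix.J (Fin n) ℝ := rfl

lemma Jmat_det (n : ℕ) : (Jmat n).det = 1 := by
  have h1 : Jmat n = fromBlocks 0 (-1) (-(-1)) 0 := by rw [neg_neg]; rfl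
  have h2 := skew_det_eq (0 : Matrix (Fin n) (Fin n) ℝ) (-1)
  rw [← h1] at h2
  have hm1 : ((-1 : Matrix (Fin n) (Fin n) ℝ).map Complex.ofReal) = -1 := by
    ext i j
    simp [Matrix.map_apply, Matrix.one_apply, apply_ite (Complex.ofReal)]
  have hm0 : ((0 : Matrix (Fin n) (Fin n) ℝ).map Complex.ofReal) = 0 := by
    ext i j; simp
  rw [hm0, hm1, smul_neg, zero_add, zero_sub, neg_neg] at h2
  simp only [Matrix.det_neg, Matrix.det_smul, Fintype.card_fin, Matrix.det_one, mul_one] at h2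
  have : ((-1 : ℂ) ^ n * Complex.I ^ n) * Complex.I ^ n = 1 := by
    rw [mul_assoc, ← mul_pow, ← mul_pow, Complex.I_mul_I, neg_mul, one_mul, neg_neg, one_pow]
  rw [this] at h2
  exact_mod_cast h2

/-- Let `S` be a real `2n×2n` symplectic matrix. Then
`det(SJ + JS) = det(I + J⁻¹S⁻¹JS) = det(I + SᵀS)`. -/
theorem statement6 (n : ℕ) (hn : 1 ≤ n)
    (S : Matrix (Fin n ⊕ Fin n) (Fin n ⊕ Fin n) ℝ)
    (hsymp : Sᵀ * Jmat n * S = Jmat n) :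
    (S * Jmat n + Jmat n * S).det = (1 + (Jmat n)⁻¹ * S⁻¹ * Jmat n * S).det ∧
    (1 + (Jmat n)⁻¹ * S⁻¹ * Jmat n * S).det = (1 + Sᵀ * S).det := by
  set J := Jmat n with hJdef
  have hJJ : J * J = -1 := Matrix.J_squared (Fin n) ℝ
  have hJinv : J⁻¹ = -J := Matrix.J_inv (Fin n) ℝ
  have hJdet : J.det = 1 := Jmat_det n
  -- determinant of S squared is 1
  have hdS2 : S.det * S.det = 1 := by
    have := congrArg Matrix.det hsymp
    rw [det_mul, det_mul, det_transpose, hJdet, mul_one] at this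
    linarith [this]
  have hdSunit : IsUnit S.det := IsUnit.of_mul_eq_one _ hdS2
  -- inverse formula
  have hSinv : S⁻¹ = -(J * Sᵀ * J) := by
    apply Matrix.inv_eq_left_inv
    calc -(J * Sᵀ * J) * S = -(J * (Sᵀ * J * S)) := by
          rw [Matrix.neg_mul, Matrix.mul_assoc, Matrix.mul_assoc, Matrix.mul_assoc]
      _ = -(J * J) := by rw [hsymp]
      _ = 1 := by rw [hJJ, neg_neg]
  -- second equality: the matrices are equal
  have hE2 : J⁻¹ * S⁻¹ * J * S = Sᵀ * S := by
    rw [hJinv, hSinv]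
    calc -J * -(J * Sᵀ * J) * J * S = J * J * Sᵀ * (J * J) * S := by
          rw [Matrix.neg_mul, Matrix.mul_neg, neg_neg]
          simp only [Matrix.mul_assoc]
      _ = Sᵀ * S := by
          rw [hJJ]
          simp only [Matrix.neg_mul, Matrix.mul_neg, Matrix.one_mul, Matrix.mul_one, neg_neg]
  -- factorization 1 + SᵀS = Sᵀ * (S - J*S*J)
  have hfact : (1 : Matrix (Fin n ⊕ Fin n) (Fin n ⊕ Fin n) ℝ) + Sᵀ * S
      = Sᵀ * (S - J * S * J) := by
    have h1 : Sᵀ * (J * S * J) = -1 := by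
      calc Sᵀ * (J * S * J) = Sᵀ * J * S * J := by simp only [Matrix.mul_assoc]
        _ = J * J := by rw [hsymp]
        _ = -1 := hJJ
    rw [Matrix.mul_sub, h1, sub_neg_eq_add, add_comm]
  -- S - J*S*J has the skew block form
  have hskew : S - J * S * J = fromBlocks (S.toBlocks₁₁ + S.toBlocks₂₂)
      (S.toBlocks₁₂ - S.toBlocks₂₁) (-(S.toBlocks₁₂ - S.toBlocks₂₁))
      (S.toBlocks₁₁ + S.toBlocks₂₂) := by
    set A := S.toBlocks₁₁; set B := S.toBlocks₁₂; set C := S.toBlocks₂₁; set D := S.toBlocks₂₂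
    have hS : S = fromBlocks A B C D := (fromBlocks_toBlocks S).symm
    have hJb : J = fromBlocks 0 (-1) 1 0 := rfl
    rw [hS, hJb, fromBlocks_multiply, fromBlocks_multiply]
    ext (i | i) (j | j) <;>
      simp [fromBlocks, Matrix.sub_apply, Matrix.add_apply, Matrix.neg_apply, sub_eq_add_neg,
        add_comm]
  have hnonneg : 0 ≤ (S - J * S * J).det := by
    rw [hskew]; exact skew_det_nonneg _ _
  -- positivity of det (1 + SᵀS)
  have hposdef : (1 + Sᵀ * S).PosDef := by
    have h1 : (Sᵀ * S).PosSemidef := by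
      have := Matrix.posSemidef_conjTranspose_mul_self S
      simpa using this
    exact Matrix.PosDef.add_posSemidef Matrix.PosDef.one h1
  have hpos : 0 < (1 + Sᵀ * S).det := hposdef.det_pos
  -- det S = 1
  have hdS : S.det = 1 := by
    have hfd : (1 + Sᵀ * S).det = S.det * (S - J * S * J).det := by
      rw [hfact, det_mul, det_transpose]
    rcases mul_self_eq_one_iff.mp hdS2 with h | h
    · exact h
    · exfalso
      rw [hfd, h] at hpos
      nlinarith [hnonneg]
  constructor
  · -- first equality
    have hE1 : S * J + J * S = S * J * (1 + J⁻¹ * S⁻¹ * J * S) := by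
      rw [Matrix.mul_add, Matrix.mul_one]
      congr 1
      symm
      calc S * J * (J⁻¹ * S⁻¹ * J * S) = S * (J * J⁻¹) * (S⁻¹ * J * S) := by
            simp only [Matrix.mul_assoc]
        _ = S * S⁻¹ * (J * S) := by
            rw [Matrix.mul_nonsing_inv _ (by rw [hJdet]; exact isUnit_one), Matrix.mul_one]
            simp only [Matrix.mul_assoc]
        _ = J * S := by
            rw [Matrix.mul_nonsing_inv _ hdSunit, Matrix.one_mul]
    rw [hE1, det_mul, det_mul, hJdet, hdS, one_mul, one_mul]
  · rw [hE2]
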